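/- Let ρ > 0, σ = ±1, s₁ ∈ ℂ, s₂ ∈ ℂ. Define ξ' = x + 2σρt + s₁, η' = x − 2σρt − s₁*, S = (2/3)ρ²ξ'³ + 2σρt + ξ' + s₂, R = −(2/3)ρ²η'³ + 2σρt − 2iσρη'² + η' + s₂*. If along a path (x(t), t) both |ξ(t)| → ∞ and |η(t)| → ∞ with ξ = x + 2σρt, η = x − 2σρt and |ξ| = O(|η|) = O(|t|) or larger, then the second-order rational solution u₂(x,t) = ρe^{2iρ²t+iφ} + 8iσρ²e^{2iρ²t+iφ}(ρ²ξ'²R + ρ²η'²S + 2iσρη'S − S)/(ρ²(ξ'²P + η'²Q + 2ξ'η') + 2ρξ'(2ρR + iσ) + 2ρη'(2ρS + iσ) − 4ρ²RS − 1), with P = 1 − 4iσρR and Q = 1 − 4iσρS, satisfies u₂(x(t),t) e^{−2iρ²t−iφ} → ρ as |t| → ∞. -/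

import Mathlib

open Complex Filter Asymptotics

/-- The second-order rational solution of the defocusing nonlocal NLS equation. -/
noncomputable def u2sol (ρ σ φ : ℝ) (s1 s2 : ℂ) (x t : ℝ) : ℂ :=
  let ξ' : ℂ := (x : ℂ) + 2 * σ * ρ * t + s1
  let η' : ℂ := (x : ℂ) - 2 * σ * ρ * t - (starRingEnd ℂ) s1
  let S : ℂ := (2 / 3) * ρ ^ 2 * ξ' ^ 3 + 2 * σ * ρ * t + ξ' + s2
  let R : ℂ := -((2 / 3) * ρ ^ 2 * η' ^ 3) + 2 * σ * ρ * t
      - 2 * Complex.I * σ * ρ * η' ^ 2 + η' + (starRingEnd ℂ) s2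
  let P : ℂ := 1 - 4 * Complex.I * σ * ρ * R
  let Q : ℂ := 1 - 4 * Complex.I * σ * ρ * S
  (ρ : ℂ) * Complex.exp (2 * Complex.I * ρ ^ 2 * t + Complex.I * φ) +
    8 * Complex.I * σ * ρ ^ 2 * Complex.exp (2 * Complex.I * ρ ^ 2 * t + Complex.I * φ) *
      (ρ ^ 2 * ξ' ^ 2 * R + ρ ^ 2 * η' ^ 2 * S + 2 * Complex.I * σ * ρ * η' * S - S) /
      (ρ ^ 2 * (ξ' ^ 2 * P + η' ^ 2 * Q + 2 * ξ' * η') +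
        2 * ρ * ξ' * (2 * ρ * R + Complex.I * σ) +
        2 * ρ * η' * (2 * ρ * S + Complex.I * σ) - 4 * ρ ^ 2 * R * S - 1)


noncomputable def nlsA (ρ σ : ℝ) (s1 : ℂ) (X t : ℝ) : ℂ :=
  (X : ℂ) + 2 * σ * ρ * t + s1

noncomputable def nlsB (ρ σ : ℝ) (s1 : ℂ) (X t : ℝ) : ℂ :=
  (X : ℂ) - 2 * σ * ρ * t - (starRingEnd ℂ) s1

noncomputable def nlsS (ρ σ : ℝ) (s1 s2 : ℂ) (X t : ℝ) : ℂ :=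
  (2 / 3) * ρ ^ 2 * (nlsA ρ σ s1 X t) ^ 3 + 2 * σ * ρ * t + nlsA ρ σ s1 X t + s2

noncomputable def nlsR (ρ σ : ℝ) (s1 s2 : ℂ) (X t : ℝ) : ℂ :=
  -((2 / 3) * ρ ^ 2 * (nlsB ρ σ s1 X t) ^ 3) + 2 * σ * ρ * t
    - 2 * Complex.I * σ * ρ * (nlsB ρ σ s1 X t) ^ 2 + nlsB ρ σ s1 X t + (starRingEnd ℂ) s2

noncomputable def nlsS1 (ρ σ : ℝ) (s1 s2 : ℂ) (X t : ℝ) : ℂ :=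
  2 * σ * ρ * t + nlsA ρ σ s1 X t + s2

noncomputable def nlsR1 (ρ σ : ℝ) (s1 s2 : ℂ) (X t : ℝ) : ℂ :=
  2 * σ * ρ * t - 2 * Complex.I * σ * ρ * (nlsB ρ σ s1 X t) ^ 2 + nlsB ρ σ s1 X t
    + (starRingEnd ℂ) s2

noncomputable def nlsNum (ρ σ : ℝ) (s1 s2 : ℂ) (X t : ℝ) : ℂ :=
  ρ ^ 2 * (nlsA ρ σ s1 X t) ^ 2 * nlsR ρ σ s1 s2 X t
    + ρ ^ 2 * (nlsB ρ σ s1 X t) ^ 2 * nlsS ρ σ s1 s2 X t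
    + 2 * Complex.I * σ * ρ * nlsB ρ σ s1 X t * nlsS ρ σ s1 s2 X t - nlsS ρ σ s1 s2 X t

noncomputable def nlsDen (ρ σ : ℝ) (s1 s2 : ℂ) (X t : ℝ) : ℂ :=
  ρ ^ 2 * ((nlsA ρ σ s1 X t) ^ 2 * (1 - 4 * Complex.I * σ * ρ * nlsR ρ σ s1 s2 X t)
      + (nlsB ρ σ s1 X t) ^ 2 * (1 - 4 * Complex.I * σ * ρ * nlsS ρ σ s1 s2 X t)
      + 2 * nlsA ρ σ s1 X t * nlsB ρ σ s1 X t)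
    + 2 * ρ * nlsA ρ σ s1 X t * (2 * ρ * nlsR ρ σ s1 s2 X t + Complex.I * σ)
    + 2 * ρ * nlsB ρ σ s1 X t * (2 * ρ * nlsS ρ σ s1 s2 X t + Complex.I * σ)
    - 4 * ρ ^ 2 * nlsR ρ σ s1 s2 X t * nlsS ρ σ s1 s2 X t - 1

noncomputable def nlsE (ρ σ : ℝ) (s1 s2 : ℂ) (X t : ℝ) : ℂ :=
  ρ ^ 2 * ((nlsA ρ σ s1 X t) ^ 2 + (nlsB ρ σ s1 X t) ^ 2
      + 2 * nlsA ρ σ s1 X t * nlsB ρ σ s1 X t)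
    - 4 * Complex.I * σ * ρ ^ 3 * ((nlsA ρ σ s1 X t) ^ 2 * nlsR1 ρ σ s1 s2 X t
      + (nlsB ρ σ s1 X t) ^ 2 * nlsS1 ρ σ s1 s2 X t)
    + 2 * ρ * nlsA ρ σ s1 X t * (2 * ρ * nlsR ρ σ s1 s2 X t + Complex.I * σ)
    + 2 * ρ * nlsB ρ σ s1 X t * (2 * ρ * nlsS ρ σ s1 s2 X t + Complex.I * σ)
    + (8 / 3) * ρ ^ 4 * (nlsB ρ σ s1 X t) ^ 3 * nlsS1 ρ σ s1 s2 X t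
    - (8 / 3) * ρ ^ 4 * (nlsA ρ σ s1 X t) ^ 3 * nlsR1 ρ σ s1 s2 X t
    - 4 * ρ ^ 2 * nlsR1 ρ σ s1 s2 X t * nlsS1 ρ σ s1 s2 X t - 1

set_option maxHeartbeats 1600000 in
lemma nls_den_decomp (ρ σ : ℝ) (s1 s2 : ℂ) (X t : ℝ) :
    nlsDen ρ σ s1 s2 X t =
      (nlsA ρ σ s1 X t) ^ 2 * (nlsB ρ σ s1 X t) ^ 2 *
        ((16 / 9) * ρ ^ 6 * nlsA ρ σ s1 X t * nlsB ρ σ s1 X t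
          - (8 / 3) * Complex.I * σ * ρ ^ 5 * (nlsA ρ σ s1 X t - nlsB ρ σ s1 X t))
      + nlsE ρ σ s1 s2 X t := by
  simp only [nlsDen, nlsE, nlsS, nlsR, nlsS1, nlsR1]
  ring

lemma key_mul (r c n d e e' : ℂ) (h : e * e' = 1) :
    (r * e + c * e * n / d) * e' = r + c * (n / d) := by
  linear_combination (r + c * n / d) * h

lemma u2sol_eq (ρ σ φ : ℝ) (s1 s2 : ℂ) (X t : ℝ) :
    u2sol ρ σ φ s1 s2 X t * Complex.exp (-(2 * Complex.I * ρ ^ 2 * t) - Complex.I * φ)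
      = (ρ : ℂ) + 8 * Complex.I * σ * ρ ^ 2 *
          (nlsNum ρ σ s1 s2 X t / nlsDen ρ σ s1 s2 X t) := by
  have h : Complex.exp (2 * Complex.I * ρ ^ 2 * t + Complex.I * φ) *
      Complex.exp (-(2 * Complex.I * ρ ^ 2 * t) - Complex.I * φ) = 1 := by
    rw [← Complex.exp_add,
      show (2 * Complex.I * (ρ:ℂ) ^ 2 * t + Complex.I * φ)
          + (-(2 * Complex.I * (ρ:ℂ) ^ 2 * t) - Complex.I * φ) = 0 by ring,
      Complex.exp_zero]
  have hu : u2sol ρ σ φ s1 s2 X t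
      = (ρ : ℂ) * Complex.exp (2 * Complex.I * ρ ^ 2 * t + Complex.I * φ)
        + 8 * Complex.I * σ * ρ ^ 2 * Complex.exp (2 * Complex.I * ρ ^ 2 * t + Complex.I * φ)
          * nlsNum ρ σ s1 s2 X t / nlsDen ρ σ s1 s2 X t := by
    simp only [u2sol, nlsNum, nlsDen, nlsS, nlsR, nlsA, nlsB]
  rw [hu]
  exact key_mul _ _ _ _ _ _ h

set_option maxHeartbeats 1600000 in
/-- Along any path on which `ξ = x + 2σρt` and `η = x − 2σρt` both blow up at
comparable rates (no smaller than `O(|t|)`), the second-order rational solution tends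
to the plane-wave background `ρ` (after removing the phase) as `|t| → ∞`; i.e. no
asymptotic soliton arises in this regime. -/
theorem second_order_no_soliton_comparable_rates (ρ σ φ : ℝ) (hρ : 0 < ρ)
    (hσ : σ = 1 ∨ σ = -1) (s1 s2 : ℂ) (x : ℝ → ℝ)
    (hξ : Filter.Tendsto (fun t : ℝ => |x t + 2 * σ * ρ * t|) (Filter.cocompact ℝ)
      Filter.atTop)
    (hη : Filter.Tendsto (fun t : ℝ => |x t - 2 * σ * ρ * t|) (Filter.cocompact ℝ)
      Filter.atTop)
    (hξη : (fun t : ℝ => x t + 2 * σ * ρ * t) =O[Filter.cocompact ℝ]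
      (fun t : ℝ => x t - 2 * σ * ρ * t))
    (hηξ : (fun t : ℝ => x t - 2 * σ * ρ * t) =O[Filter.cocompact ℝ]
      (fun t : ℝ => x t + 2 * σ * ρ * t))
    (htξ : (fun t : ℝ => t) =O[Filter.cocompact ℝ]
      (fun t : ℝ => x t + 2 * σ * ρ * t)) :
    Filter.Tendsto
      (fun t : ℝ => u2sol ρ σ φ s1 s2 (x t) t *
        Complex.exp (-(2 * Complex.I * ρ ^ 2 * t) - Complex.I * φ))
      (Filter.cocompact ℝ) (nhds (ρ : ℂ)) := by
  have hfun : (fun t : ℝ => u2sol ρ σ φ s1 s2 (x t) t *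
      Complex.exp (-(2 * Complex.I * ρ ^ 2 * t) - Complex.I * φ))
      = fun t : ℝ => (ρ : ℂ) + 8 * Complex.I * σ * ρ ^ 2 *
          (nlsNum ρ σ s1 s2 (x t) t / nlsDen ρ σ s1 s2 (x t) t) :=
    funext fun t => u2sol_eq ρ σ φ s1 s2 (x t) t
  rw [hfun]
  have hmain : Tendsto (fun t : ℝ => nlsNum ρ σ s1 s2 (x t) t / nlsDen ρ σ s1 s2 (x t) t)
      (Filter.cocompact ℝ) (nhds 0) := by
    set l := Filter.cocompact ℝ with hldef
    have hgnorm : Tendsto (fun t : ℝ => ‖|x t + 2 * σ * ρ * t|‖) l atTop := by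
      simpa [Real.norm_eq_abs, _root_.abs_abs] using hξ
    have hgmono : ∀ m n : ℕ, m ≤ n →
        (fun t : ℝ => |x t + 2 * σ * ρ * t| ^ m) =O[l]
          (fun t : ℝ => |x t + 2 * σ * ρ * t| ^ n) := by
      intro m n hmn
      rw [Asymptotics.isBigO_iff]
      refine ⟨1, ?_⟩
      filter_upwards [hξ.eventually_ge_atTop 1] with t ht
      simp only [one_mul, norm_pow, Real.norm_eq_abs, _root_.abs_abs]
      exact pow_le_pow_right₀ ht hmn
    have hgpow : ∀ n : ℕ, 1 ≤ n → (fun t : ℝ => |x t + 2 * σ * ρ * t|) =O[l]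
        (fun t : ℝ => |x t + 2 * σ * ρ * t| ^ n) := by
      intro n hn
      simpa using hgmono 1 n hn
    have hconst : ∀ (c : ℂ) (n : ℕ), 1 ≤ n → (fun _ : ℝ => c) =O[l]
        (fun t : ℝ => |x t + 2 * σ * ρ * t| ^ n) := by
      intro c n hn
      exact ((Asymptotics.isLittleO_const_left.mpr (Or.inr hgnorm)).isBigO).trans (hgpow n hn)
    have hmulO : ∀ (f g : ℝ → ℂ) (m n k : ℕ), m + n = k →
        f =O[l] (fun t : ℝ => |x t + 2 * σ * ρ * t| ^ m) →
        g =O[l] (fun t : ℝ => |x t + 2 * σ * ρ * t| ^ n) →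
        (fun t : ℝ => f t * g t) =O[l] (fun t : ℝ => |x t + 2 * σ * ρ * t| ^ k) := by
      intro f g m n k hk hf hg
      subst hk
      exact (hf.mul hg).congr_right fun t => (pow_add _ m n).symm
    have hpowO : ∀ (f : ℝ → ℂ) (m n k : ℕ), m * n = k →
        f =O[l] (fun t : ℝ => |x t + 2 * σ * ρ * t| ^ m) →
        (fun t : ℝ => f t ^ n) =O[l] (fun t : ℝ => |x t + 2 * σ * ρ * t| ^ k) := by
      intro f m n k hk hf
      subst hk
      exact (hf.pow n).congr_right fun t => (pow_mul _ m n).symm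
    have hξw : (fun t : ℝ => x t + 2 * σ * ρ * t) =O[l]
        (fun t : ℝ => |x t + 2 * σ * ρ * t|) :=
      Asymptotics.isBigO_of_le _ fun t => by
        simp only [Real.norm_eq_abs, _root_.abs_abs, le_refl]
    have hA : (fun t : ℝ => nlsA ρ σ s1 (x t) t) =O[l]
        (fun t : ℝ => |x t + 2 * σ * ρ * t| ^ 1) := by
      have h1 : (fun t : ℝ => ((x t + 2 * σ * ρ * t : ℝ) : ℂ)) =O[l]
          (fun t : ℝ => |x t + 2 * σ * ρ * t|) :=
        Asymptotics.isBigO_of_le _ fun t => by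
          simp only [Complex.norm_real, Real.norm_eq_abs, _root_.abs_abs, le_refl]
      have h2 : (fun _ : ℝ => s1) =O[l] (fun t : ℝ => |x t + 2 * σ * ρ * t|) :=
        (Asymptotics.isLittleO_const_left.mpr (Or.inr hgnorm)).isBigO
      exact (((h1.add h2).congr_left fun t => by
        simp only [nlsA]; push_cast; ring).trans (hgpow 1 le_rfl))
    have hB : (fun t : ℝ => nlsB ρ σ s1 (x t) t) =O[l]
        (fun t : ℝ => |x t + 2 * σ * ρ * t| ^ 1) := by
      have h1 : (fun t : ℝ => ((x t - 2 * σ * ρ * t : ℝ) : ℂ)) =O[l]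
          (fun t : ℝ => x t - 2 * σ * ρ * t) :=
        Asymptotics.isBigO_of_le _ fun t => by
          simp only [Complex.norm_real, Real.norm_eq_abs, le_refl]
      have h2 : (fun _ : ℝ => (starRingEnd ℂ) s1) =O[l]
          (fun t : ℝ => |x t + 2 * σ * ρ * t|) :=
        (Asymptotics.isLittleO_const_left.mpr (Or.inr hgnorm)).isBigO
      exact ((((h1.trans (hηξ.trans hξw)).sub h2).congr_left fun t => by
        simp only [nlsB]; push_cast; ring).trans (hgpow 1 le_rfl))
    have hT : (fun t : ℝ => 2 * (σ : ℂ) * (ρ : ℂ) * (t : ℂ)) =O[l]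
        (fun t : ℝ => |x t + 2 * σ * ρ * t| ^ 1) := by
      have h1 : (fun t : ℝ => ((t : ℝ) : ℂ)) =O[l] (fun t : ℝ => t) :=
        Asymptotics.isBigO_of_le _ fun t => by
          simp only [Complex.norm_real, Real.norm_eq_abs, le_refl]
      exact ((((h1.trans (htξ.trans hξw)).const_mul_left
        (2 * (σ : ℂ) * (ρ : ℂ))).congr_left fun t => by ring).trans (hgpow 1 le_rfl))
    have hS : (fun t : ℝ => nlsS ρ σ s1 s2 (x t) t) =O[l]
        (fun t : ℝ => |x t + 2 * σ * ρ * t| ^ 3) := by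
      have h1 := (hpowO _ 1 3 3 rfl hA).const_mul_left ((2 / 3) * (ρ : ℂ) ^ 2)
      have h2 := hT.trans (hgmono 1 3 (by norm_num))
      have h3 := hA.trans (hgmono 1 3 (by norm_num))
      have h4 := hconst s2 3 (by norm_num)
      exact (((h1.add h2).add h3).add h4).congr_left fun t => by
        simp only [nlsS]; try ring
    have hR : (fun t : ℝ => nlsR ρ σ s1 s2 (x t) t) =O[l]
        (fun t : ℝ => |x t + 2 * σ * ρ * t| ^ 3) := by
      have h1 := (hpowO _ 1 3 3 rfl hB).const_mul_left (-((2 / 3) * (ρ : ℂ) ^ 2))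
      have h2 := hT.trans (hgmono 1 3 (by norm_num))
      have h3 := ((hpowO _ 1 2 2 rfl hB).const_mul_left
        (-(2 * Complex.I * (σ : ℂ) * (ρ : ℂ)))).trans (hgmono 2 3 (by norm_num))
      have h4 := hB.trans (hgmono 1 3 (by norm_num))
      have h5 := hconst ((starRingEnd ℂ) s2) 3 (by norm_num)
      exact ((((h1.add h2).add h3).add h4).add h5).congr_left fun t => by
        simp only [nlsR]; try ring
    have hS1 : (fun t : ℝ => nlsS1 ρ σ s1 s2 (x t) t) =O[l]
        (fun t : ℝ => |x t + 2 * σ * ρ * t| ^ 1) := by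
      have h3 := hconst s2 1 le_rfl
      exact ((hT.add hA).add h3).congr_left fun t => by simp only [nlsS1]; try ring
    have hR1 : (fun t : ℝ => nlsR1 ρ σ s1 s2 (x t) t) =O[l]
        (fun t : ℝ => |x t + 2 * σ * ρ * t| ^ 2) := by
      have h1 := hT.trans (hgmono 1 2 (by norm_num))
      have h2 := (hpowO _ 1 2 2 rfl hB).const_mul_left (-(2 * Complex.I * (σ : ℂ) * (ρ : ℂ)))
      have h3 := hB.trans (hgmono 1 2 (by norm_num))
      have h4 := hconst ((starRingEnd ℂ) s2) 2 (by norm_num)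
      exact (((h1.add h2).add h3).add h4).congr_left fun t => by
        simp only [nlsR1]; try ring
    have hNum : (fun t : ℝ => nlsNum ρ σ s1 s2 (x t) t) =O[l]
        (fun t : ℝ => |x t + 2 * σ * ρ * t| ^ 5) := by
      have h1 := (hmulO _ _ 2 3 5 rfl (hpowO _ 1 2 2 rfl hA) hR).const_mul_left ((ρ : ℂ) ^ 2)
      have h2 := (hmulO _ _ 2 3 5 rfl (hpowO _ 1 2 2 rfl hB) hS).const_mul_left ((ρ : ℂ) ^ 2)
      have h3 := ((hmulO _ _ 1 3 4 rfl hB hS).const_mul_left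
        (2 * Complex.I * (σ : ℂ) * (ρ : ℂ))).trans (hgmono 4 5 (by norm_num))
      have h4 := hS.trans (hgmono 3 5 (by norm_num))
      exact (((h1.add h2).add h3).sub h4).congr_left fun t => by
        simp only [nlsNum]; try ring
    have hE : (fun t : ℝ => nlsE ρ σ s1 s2 (x t) t) =O[l]
        (fun t : ℝ => |x t + 2 * σ * ρ * t| ^ 5) := by
      have e1 := ((((hpowO _ 1 2 2 rfl hA).add (hpowO _ 1 2 2 rfl hB)).add
          ((hmulO _ _ 1 1 2 rfl hA hB).const_mul_left (2 : ℂ))).const_mul_left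
          ((ρ : ℂ) ^ 2)).trans (hgmono 2 5 (by norm_num))
      have e2 := (((hmulO _ _ 2 2 4 rfl (hpowO _ 1 2 2 rfl hA) hR1).add
          ((hmulO _ _ 2 1 3 rfl (hpowO _ 1 2 2 rfl hB) hS1).trans
            (hgmono 3 4 (by norm_num)))).const_mul_left
          (4 * Complex.I * (σ : ℂ) * (ρ : ℂ) ^ 3)).trans (hgmono 4 5 (by norm_num))
      have inner3 := (hR.const_mul_left (2 * (ρ : ℂ))).add
        (hconst (Complex.I * (σ : ℂ)) 3 (by norm_num))
      have e3 := ((hmulO _ _ 1 3 4 rfl hA inner3).const_mul_left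
        (2 * (ρ : ℂ))).trans (hgmono 4 5 (by norm_num))
      have inner4 := (hS.const_mul_left (2 * (ρ : ℂ))).add
        (hconst (Complex.I * (σ : ℂ)) 3 (by norm_num))
      have e4 := ((hmulO _ _ 1 3 4 rfl hB inner4).const_mul_left
        (2 * (ρ : ℂ))).trans (hgmono 4 5 (by norm_num))
      have e5 := ((hmulO _ _ 3 1 4 rfl (hpowO _ 1 3 3 rfl hB) hS1).const_mul_left
        ((8 / 3) * (ρ : ℂ) ^ 4)).trans (hgmono 4 5 (by norm_num))
      have e6 := (hmulO _ _ 3 2 5 rfl (hpowO _ 1 3 3 rfl hA) hR1).const_mul_left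
        ((8 / 3) * (ρ : ℂ) ^ 4)
      have e7 := ((hmulO _ _ 2 1 3 rfl hR1 hS1).const_mul_left
        (4 * (ρ : ℂ) ^ 2)).trans (hgmono 3 5 (by norm_num))
      have e8 := hconst 1 5 (by norm_num)
      exact (((((((e1.sub e2).add e3).add e4).add e5).sub e6).sub e7).sub e8).congr_left
        fun t => by simp only [nlsE]; try ring
    obtain ⟨K₁, hK₁pos, hK₁⟩ := hξη.exists_pos
    obtain ⟨K₂, hK₂pos, hK₂⟩ := hηξ.exists_pos
    obtain ⟨CE, hCEpos, hCE⟩ := hE.exists_pos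
    obtain ⟨CN, hCNpos, hCN⟩ := hNum.exists_pos
    have hc0 : (0:ℝ) < ρ ^ 6 / (18 * K₁ ^ 3) := by positivity
    set c0 : ℝ := ρ ^ 6 / (18 * K₁ ^ 3) with hc0def
    rw [tendsto_zero_iff_norm_tendsto_zero]
    refine squeeze_zero' (Filter.Eventually.of_forall fun t => norm_nonneg _) ?_
      (hξ.const_div_atTop (2 * CN / c0))
    filter_upwards [hK₁.bound, hK₂.bound, hCE.bound, hCN.bound,
      hξ.eventually_ge_atTop (1 + 2 * ‖s1‖ + 2 * K₁ * ‖s1‖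
        + 2 * K₁ * (|s1.re| * (K₂ + 1) + s1.re ^ 2 + s1.im ^ 2) + 2 * CE / c0)]
      with t h1 h2 h3 h4 h5
    simp only [Real.norm_eq_abs, _root_.abs_pow, _root_.abs_abs] at h1 h2 h3 h4
    have hns1 : (0:ℝ) ≤ ‖s1‖ := norm_nonneg _
    have hare : (0:ℝ) ≤ |s1.re| := abs_nonneg _
    have hsq : (0:ℝ) ≤ s1.re ^ 2 + s1.im ^ 2 := by positivity
    have hn1 : (0:ℝ) ≤ 2 * K₁ * ‖s1‖ := by positivity
    have hn2 : (0:ℝ) ≤ 2 * K₁ * (|s1.re| * (K₂ + 1) + s1.re ^ 2 + s1.im ^ 2) := by positivity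
    have hn3 : (0:ℝ) ≤ 2 * CE / c0 := by positivity
    have hK₁ne : K₁ ≠ 0 := ne_of_gt hK₁pos
    have hc0ne : c0 ≠ 0 := ne_of_gt hc0
    have hW1 : (1:ℝ) ≤ |x t + 2 * σ * ρ * t| := by linarith
    have hW0 : (0:ℝ) < |x t + 2 * σ * ρ * t| := lt_of_lt_of_le zero_lt_one hW1
    have hAeq : nlsA ρ σ s1 (x t) t = ((x t + 2 * σ * ρ * t : ℝ) : ℂ) + s1 := by
      simp only [nlsA]; push_cast; ring
    have hBeq : nlsB ρ σ s1 (x t) t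
        = ((x t - 2 * σ * ρ * t : ℝ) : ℂ) - (starRingEnd ℂ) s1 := by
      simp only [nlsB]; push_cast; ring
    have hAlb : |x t + 2 * σ * ρ * t| - ‖s1‖ ≤ ‖nlsA ρ σ s1 (x t) t‖ := by
      rw [hAeq]
      have h := norm_add_le (((x t + 2 * σ * ρ * t : ℝ) : ℂ) + s1) (-s1)
      simp only [add_neg_cancel_right, norm_neg, Complex.norm_real, Real.norm_eq_abs] at h
      linarith
    have hA2 : |x t + 2 * σ * ρ * t| / 2 ≤ ‖nlsA ρ σ s1 (x t) t‖ := by linarith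
    have hηlb : |x t + 2 * σ * ρ * t| / K₁ ≤ |x t - 2 * σ * ρ * t| := by
      rw [div_le_iff₀ hK₁pos]; linarith
    have hBlb : |x t - 2 * σ * ρ * t| - ‖s1‖ ≤ ‖nlsB ρ σ s1 (x t) t‖ := by
      rw [hBeq]
      have h := norm_add_le (((x t - 2 * σ * ρ * t : ℝ) : ℂ) - (starRingEnd ℂ) s1)
        ((starRingEnd ℂ) s1)
      simp only [sub_add_cancel, Complex.norm_real, Real.norm_eq_abs, RCLike.norm_conj] at h
      linarith
    have hB2 : |x t + 2 * σ * ρ * t| / (2 * K₁) ≤ ‖nlsB ρ σ s1 (x t) t‖ := by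
      have hs1W : ‖s1‖ ≤ |x t + 2 * σ * ρ * t| / (2 * K₁) := by
        rw [le_div_iff₀ (by positivity)]; linarith
      have hhalf : |x t + 2 * σ * ρ * t| / K₁ - |x t + 2 * σ * ρ * t| / (2 * K₁)
          = |x t + 2 * σ * ρ * t| / (2 * K₁) := by
        field_simp; ring
      linarith
    -- real part of A * B
    have hABre : (nlsA ρ σ s1 (x t) t * nlsB ρ σ s1 (x t) t).re
        = (x t + 2 * σ * ρ * t) * (x t - 2 * σ * ρ * t)
          + s1.re * ((x t - 2 * σ * ρ * t) - (x t + 2 * σ * ρ * t))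
          - (s1.re ^ 2 + s1.im ^ 2) := by
      rw [hAeq, hBeq]
      simp only [Complex.mul_re, Complex.add_re, Complex.sub_re, Complex.add_im,
        Complex.sub_im, Complex.ofReal_re, Complex.ofReal_im, Complex.conj_re,
        Complex.conj_im]
      ring
    have him : (nlsA ρ σ s1 (x t) t - nlsB ρ σ s1 (x t) t).im = 0 := by
      rw [hAeq, hBeq]
      simp [Complex.conj_im]
    have hBmeq : (16 / 9) * (ρ : ℂ) ^ 6 * nlsA ρ σ s1 (x t) t * nlsB ρ σ s1 (x t) t
          - (8 / 3) * Complex.I * (σ : ℂ) * (ρ : ℂ) ^ 5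
            * (nlsA ρ σ s1 (x t) t - nlsB ρ σ s1 (x t) t)
        = ((16 / 9 * ρ ^ 6 : ℝ) : ℂ) * (nlsA ρ σ s1 (x t) t * nlsB ρ σ s1 (x t) t)
          - ((8 / 3 * σ * ρ ^ 5 : ℝ) : ℂ)
            * (Complex.I * (nlsA ρ σ s1 (x t) t - nlsB ρ σ s1 (x t) t)) := by
      push_cast; ring
    have hBmre : ((16 / 9) * (ρ : ℂ) ^ 6 * nlsA ρ σ s1 (x t) t * nlsB ρ σ s1 (x t) t
          - (8 / 3) * Complex.I * (σ : ℂ) * (ρ : ℂ) ^ 5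
            * (nlsA ρ σ s1 (x t) t - nlsB ρ σ s1 (x t) t)).re
        = 16 / 9 * ρ ^ 6 * (nlsA ρ σ s1 (x t) t * nlsB ρ σ s1 (x t) t).re := by
      rw [hBmeq, Complex.sub_re, Complex.re_ofReal_mul, Complex.re_ofReal_mul,
        Complex.I_mul_re, him]
      ring
    have hreABlb : |x t + 2 * σ * ρ * t| ^ 2 / (2 * K₁)
        ≤ |(nlsA ρ σ s1 (x t) t * nlsB ρ σ s1 (x t) t).re| := by
      rw [hABre]
      have habs1 : |x t + 2 * σ * ρ * t| * (|x t + 2 * σ * ρ * t| / K₁)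
          ≤ |(x t + 2 * σ * ρ * t) * (x t - 2 * σ * ρ * t)| := by
        rw [_root_.abs_mul]
        exact mul_le_mul_of_nonneg_left hηlb (abs_nonneg _)
      have habs2 : |s1.re * ((x t - 2 * σ * ρ * t) - (x t + 2 * σ * ρ * t))
            - (s1.re ^ 2 + s1.im ^ 2)|
          ≤ |s1.re| * ((K₂ + 1) * |x t + 2 * σ * ρ * t|) + (s1.re ^ 2 + s1.im ^ 2) := by
        have g1 : |s1.re * ((x t - 2 * σ * ρ * t) - (x t + 2 * σ * ρ * t))
              - (s1.re ^ 2 + s1.im ^ 2)|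
            ≤ |s1.re| * |(x t - 2 * σ * ρ * t) - (x t + 2 * σ * ρ * t)|
              + (s1.re ^ 2 + s1.im ^ 2) := by
          calc _ ≤ |s1.re * ((x t - 2 * σ * ρ * t) - (x t + 2 * σ * ρ * t))|
                + |s1.re ^ 2 + s1.im ^ 2| := _root_.abs_sub _ _
            _ = _ := by rw [_root_.abs_mul, _root_.abs_of_nonneg hsq]
        have g2 : |(x t - 2 * σ * ρ * t) - (x t + 2 * σ * ρ * t)|
            ≤ (K₂ + 1) * |x t + 2 * σ * ρ * t| := by
          calc _ ≤ |x t - 2 * σ * ρ * t| + |x t + 2 * σ * ρ * t| := _root_.abs_sub _ _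
            _ ≤ _ := by linarith
        nlinarith [mul_le_mul_of_nonneg_left g2 hare]
      have gtri : |(x t + 2 * σ * ρ * t) * (x t - 2 * σ * ρ * t)|
          - |s1.re * ((x t - 2 * σ * ρ * t) - (x t + 2 * σ * ρ * t))
              - (s1.re ^ 2 + s1.im ^ 2)|
          ≤ |(x t + 2 * σ * ρ * t) * (x t - 2 * σ * ρ * t)
              + (s1.re * ((x t - 2 * σ * ρ * t) - (x t + 2 * σ * ρ * t))
                - (s1.re ^ 2 + s1.im ^ 2))| := by
        have h := abs_add_le ((x t + 2 * σ * ρ * t) * (x t - 2 * σ * ρ * t)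
            + (s1.re * ((x t - 2 * σ * ρ * t) - (x t + 2 * σ * ρ * t))
              - (s1.re ^ 2 + s1.im ^ 2)))
          (-(s1.re * ((x t - 2 * σ * ρ * t) - (x t + 2 * σ * ρ * t))
              - (s1.re ^ 2 + s1.im ^ 2)))
        simp only [add_neg_cancel_right, abs_neg] at h
        linarith
      have hkey : |x t + 2 * σ * ρ * t| ^ 2 / (2 * K₁)
          + (|s1.re| * ((K₂ + 1) * |x t + 2 * σ * ρ * t|) + (s1.re ^ 2 + s1.im ^ 2))
          ≤ |x t + 2 * σ * ρ * t| * (|x t + 2 * σ * ρ * t| / K₁) := by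
        have hd : 2 * K₁ * (|s1.re| * (K₂ + 1) + s1.re ^ 2 + s1.im ^ 2)
            ≤ |x t + 2 * σ * ρ * t| := by linarith
        have e1 : |x t + 2 * σ * ρ * t| * (|x t + 2 * σ * ρ * t| / K₁)
            - |x t + 2 * σ * ρ * t| ^ 2 / (2 * K₁)
            = |x t + 2 * σ * ρ * t| ^ 2 / (2 * K₁) := by
          field_simp; ring
        have h7 : (|s1.re| * (K₂ + 1) + (s1.re ^ 2 + s1.im ^ 2)) * |x t + 2 * σ * ρ * t|
            ≤ |x t + 2 * σ * ρ * t| ^ 2 / (2 * K₁) := by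
          rw [le_div_iff₀ (by positivity : (0:ℝ) < 2 * K₁)]
          nlinarith [mul_le_mul_of_nonneg_right hd (le_of_lt hW0)]
        have h8 : s1.re ^ 2 + s1.im ^ 2 ≤ (s1.re ^ 2 + s1.im ^ 2) * |x t + 2 * σ * ρ * t| := by
          nlinarith [mul_nonneg hsq (by linarith : (0:ℝ) ≤ |x t + 2 * σ * ρ * t| - 1)]
        nlinarith [e1, h7, h8]
      have : |x t + 2 * σ * ρ * t| ^ 2 / (2 * K₁)
          ≤ |(x t + 2 * σ * ρ * t) * (x t - 2 * σ * ρ * t)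
              + (s1.re * ((x t - 2 * σ * ρ * t) - (x t + 2 * σ * ρ * t))
                - (s1.re ^ 2 + s1.im ^ 2))| := by linarith
      calc |x t + 2 * σ * ρ * t| ^ 2 / (2 * K₁) ≤ _ := this
        _ = _ := by congr 1; ring
    have hBmn : 16 / 9 * ρ ^ 6 * (|x t + 2 * σ * ρ * t| ^ 2 / (2 * K₁))
        ≤ ‖(16 / 9) * (ρ : ℂ) ^ 6 * nlsA ρ σ s1 (x t) t * nlsB ρ σ s1 (x t) t
          - (8 / 3) * Complex.I * (σ : ℂ) * (ρ : ℂ) ^ 5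
            * (nlsA ρ σ s1 (x t) t - nlsB ρ σ s1 (x t) t)‖ := by
      have h9 := Complex.abs_re_le_norm ((16 / 9) * (ρ : ℂ) ^ 6 * nlsA ρ σ s1 (x t) t
          * nlsB ρ σ s1 (x t) t - (8 / 3) * Complex.I * (σ : ℂ) * (ρ : ℂ) ^ 5
            * (nlsA ρ σ s1 (x t) t - nlsB ρ σ s1 (x t) t))
      rw [hBmre, _root_.abs_mul, _root_.abs_of_nonneg (by positivity :
        (0:ℝ) ≤ 16 / 9 * ρ ^ 6)] at h9
      calc 16 / 9 * ρ ^ 6 * (|x t + 2 * σ * ρ * t| ^ 2 / (2 * K₁))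
          ≤ 16 / 9 * ρ ^ 6 * |(nlsA ρ σ s1 (x t) t * nlsB ρ σ s1 (x t) t).re| := by
            exact mul_le_mul_of_nonneg_left hreABlb (by positivity)
        _ ≤ _ := h9
    have hDlb : c0 / 2 * |x t + 2 * σ * ρ * t| ^ 6 ≤ ‖nlsDen ρ σ s1 s2 (x t) t‖ := by
      rw [nls_den_decomp]
      have htri : ‖nlsA ρ σ s1 (x t) t ^ 2 * nlsB ρ σ s1 (x t) t ^ 2 *
            ((16 / 9) * (ρ : ℂ) ^ 6 * nlsA ρ σ s1 (x t) t * nlsB ρ σ s1 (x t) t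
              - (8 / 3) * Complex.I * (σ : ℂ) * (ρ : ℂ) ^ 5
                * (nlsA ρ σ s1 (x t) t - nlsB ρ σ s1 (x t) t))‖
          - ‖nlsE ρ σ s1 s2 (x t) t‖
          ≤ ‖nlsA ρ σ s1 (x t) t ^ 2 * nlsB ρ σ s1 (x t) t ^ 2 *
            ((16 / 9) * (ρ : ℂ) ^ 6 * nlsA ρ σ s1 (x t) t * nlsB ρ σ s1 (x t) t
              - (8 / 3) * Complex.I * (σ : ℂ) * (ρ : ℂ) ^ 5
                * (nlsA ρ σ s1 (x t) t - nlsB ρ σ s1 (x t) t))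
            + nlsE ρ σ s1 s2 (x t) t‖ := by
        have h := norm_add_le (nlsA ρ σ s1 (x t) t ^ 2 * nlsB ρ σ s1 (x t) t ^ 2 *
            ((16 / 9) * (ρ : ℂ) ^ 6 * nlsA ρ σ s1 (x t) t * nlsB ρ σ s1 (x t) t
              - (8 / 3) * Complex.I * (σ : ℂ) * (ρ : ℂ) ^ 5
                * (nlsA ρ σ s1 (x t) t - nlsB ρ σ s1 (x t) t))
            + nlsE ρ σ s1 s2 (x t) t) (-nlsE ρ σ s1 s2 (x t) t)
        simp only [add_neg_cancel_right, norm_neg] at h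
        linarith
      have hMn : c0 * |x t + 2 * σ * ρ * t| ^ 6
          ≤ ‖nlsA ρ σ s1 (x t) t ^ 2 * nlsB ρ σ s1 (x t) t ^ 2 *
            ((16 / 9) * (ρ : ℂ) ^ 6 * nlsA ρ σ s1 (x t) t * nlsB ρ σ s1 (x t) t
              - (8 / 3) * Complex.I * (σ : ℂ) * (ρ : ℂ) ^ 5
                * (nlsA ρ σ s1 (x t) t - nlsB ρ σ s1 (x t) t))‖ := by
        rw [norm_mul, norm_mul, norm_pow, norm_pow]
        have hcalc : ∀ W : ℝ, c0 * W ^ 6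
            = (W / 2) ^ 2 * (W / (2 * K₁)) ^ 2 * (16 / 9 * ρ ^ 6 * (W ^ 2 / (2 * K₁))) := by
          intro W; rw [hc0def]; field_simp; ring
        calc c0 * |x t + 2 * σ * ρ * t| ^ 6
            = (|x t + 2 * σ * ρ * t| / 2) ^ 2 * (|x t + 2 * σ * ρ * t| / (2 * K₁)) ^ 2
              * (16 / 9 * ρ ^ 6 * (|x t + 2 * σ * ρ * t| ^ 2 / (2 * K₁))) := hcalc _
          _ ≤ _ := by gcongr <;> positivity
      have hEn : ‖nlsE ρ σ s1 s2 (x t) t‖ ≤ CE * |x t + 2 * σ * ρ * t| ^ 5 := h3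
      have hcw : 2 * CE / c0 ≤ |x t + 2 * σ * ρ * t| := by linarith
      have hcw2 : 2 * CE ≤ c0 * |x t + 2 * σ * ρ * t| := by
        rw [div_le_iff₀ hc0] at hcw; linarith
      have hEW : CE * |x t + 2 * σ * ρ * t| ^ 5
          ≤ c0 / 2 * |x t + 2 * σ * ρ * t| ^ 6 := by
        nlinarith [mul_nonneg (pow_nonneg (abs_nonneg (x t + 2 * σ * ρ * t)) 5)
          (by linarith : (0:ℝ) ≤ c0 * |x t + 2 * σ * ρ * t| - 2 * CE)]
      linarith
    have hDpos : (0:ℝ) < c0 / 2 * |x t + 2 * σ * ρ * t| ^ 6 :=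
      mul_pos (by positivity) (pow_pos hW0 6)
    calc ‖nlsNum ρ σ s1 s2 (x t) t / nlsDen ρ σ s1 s2 (x t) t‖
        = ‖nlsNum ρ σ s1 s2 (x t) t‖ / ‖nlsDen ρ σ s1 s2 (x t) t‖ := norm_div _ _
      _ ≤ (CN * |x t + 2 * σ * ρ * t| ^ 5) / (c0 / 2 * |x t + 2 * σ * ρ * t| ^ 6) := by
          apply div_le_div₀ (by positivity) h4 hDpos hDlb
      _ = 2 * CN / c0 / |x t + 2 * σ * ρ * t| := by
          field_simp
  have h2 := hmain.const_mul (8 * Complex.I * (σ : ℂ) * (ρ : ℂ) ^ 2)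
  have h3 := h2.const_add (ρ : ℂ)
  simpa [mul_assoc] using h3
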